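/- A Shuffler strategy S is a maximizing Shuffler strategy (i.e., F(d,S) = max_{S'} F(d,S') for all n-vectors d) if and only if S(d) is uniform on [n] for every fully-supported n-vector d (one with all entries positive). -/

import Mathlib

open Finset

abbrev Deck (n : ℕ) := Fin n → ℕ
abbrev Strat (n : ℕ) := Deck n → Fin n → ℝ

/-- Remove one copy of card type `j` from the deck. -/
def Deck.sub {n : ℕ} (d : Deck n) (j : Fin n) : Deck n :=
  fun i => if i = j then d i - 1 else d i

/-- `p` is a probability distribution on `Fin n`. -/
def IsDist {n : ℕ} (p : Fin n → ℝ) : Prop :=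
  (∀ i, 0 ≤ p i) ∧ ∑ i, p i = 1

/-- A Guesser strategy outputs a distribution on card types for each nonzero deck. -/
def IsGuesser {n : ℕ} (G : Strat n) : Prop :=
  ∀ d : Deck n, d ≠ 0 → IsDist (G d)

/-- A Shuffler strategy outputs a distribution supported on the support of the deck. -/
def IsShuffler {n : ℕ} (S : Strat n) : Prop :=
  ∀ d : Deck n, d ≠ 0 → IsDist (S d) ∧ ∀ i, S d i ≠ 0 → d i ≠ 0

/-- Expected score of the game, computed with fuel `N` (the number of cards). -/
def scoreAux {n : ℕ} (G S : Strat n) : ℕ → Deck n → ℝ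
  | 0, _ => 0
  | N + 1, d => ∑ j ∈ Finset.univ.filter (fun j => d j ≠ 0),
      S d j * (G d j + scoreAux G S N (d.sub j))

/-- The expected score `E[C(d,G,S)]`. -/
noncomputable def score {n : ℕ} (G S : Strat n) (d : Deck n) : ℝ :=
  scoreAux G S (∑ i, d i) d

/-- `f(d,S)`: maximum expected score over all Guesser strategies. -/
noncomputable def fval {n : ℕ} (S : Strat n) (d : Deck n) : ℝ :=
  sSup {x | ∃ G, IsGuesser G ∧ score G S d = x}

/-- `F(d,S)`: minimum expected score over all Guesser strategies. -/
noncomputable def Fval {n : ℕ} (S : Strat n) (d : Deck n) : ℝ :=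
  sInf {x | ∃ G, IsGuesser G ∧ score G S d = x}

/-- `f(d) = min_S f(d,S)`. -/
noncomputable def fopt {n : ℕ} (d : Deck n) : ℝ :=
  sInf {x | ∃ S, IsShuffler S ∧ fval S d = x}

/-- `F(d) = max_S F(d,S)`. -/
noncomputable def Fopt {n : ℕ} (d : Deck n) : ℝ :=
  sSup {x | ∃ S, IsShuffler S ∧ Fval S d = x}

/-- The greedy Shuffler strategy: uniform on the support of the deck. -/
noncomputable def greedy {n : ℕ} : Strat n :=
  fun d i => if d i ≠ 0 then ((Finset.univ.filter fun j => d j ≠ 0).card : ℝ)⁻¹ else 0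

namespace Stmt8


variable {n : ℕ}

lemma deck_ne_zero_iff (d : Deck n) : d ≠ 0 ↔ ∃ i, d i ≠ 0 := by
  rw [Function.ne_iff]; simp

lemma total_sub (d : Deck n) (j : Fin n) (h : d j ≠ 0) :
    (∑ i, d.sub j i) + 1 = ∑ i, d i := by
  have e1 : ∀ s : Deck n, ∑ i, s i = s j + ∑ i ∈ univ.erase j, s i :=
    fun s => (Finset.add_sum_erase _ s (mem_univ j)).symm
  rw [e1 (d.sub j), e1 d]
  have e2 : ∑ i ∈ univ.erase j, d.sub j i = ∑ i ∈ univ.erase j, d i :=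
    Finset.sum_congr rfl (fun i hi => by
      simp [Deck.sub, (Finset.mem_erase.mp hi).1])
  rw [e2]
  have : d.sub j j = d j - 1 := by simp [Deck.sub]
  rw [this]
  omega

lemma sub_comm (d : Deck n) (j k : Fin n) : (d.sub j).sub k = (d.sub k).sub j := by
  funext i
  by_cases h1 : i = k <;> by_cases h2 : i = j <;>
    simp [Deck.sub, h1, h2] <;> split <;> omega

noncomputable def Vaux (n : ℕ) : ℕ → Deck n → ℝ
  | 0, _ => 0
  | N + 1, d => if ∀ i, d i ≠ 0 then (n : ℝ)⁻¹ * (1 + ∑ j, Vaux n N (d.sub j)) else 0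

noncomputable def Vd (d : Deck n) : ℝ := Vaux n (∑ i, d i) d

lemma Vaux_nonneg : ∀ (N : ℕ) (d : Deck n), 0 ≤ Vaux n N d := by
  intro N
  induction N with
  | zero => intro d; simp [Vaux]
  | succ N ih =>
    intro d
    rw [Vaux]
    split
    · have : 0 ≤ ∑ j, Vaux n N (d.sub j) := Finset.sum_nonneg fun j _ => ih _
      positivity
    · exact le_refl _

lemma Vd_nonneg (d : Deck n) : 0 ≤ Vd d := Vaux_nonneg _ d

lemma V_of_not_full (d : Deck n) (h : ¬ ∀ i, d i ≠ 0) : Vd d = 0 := by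
  unfold Vd
  cases hN : ∑ i, d i with
  | zero => rfl
  | succ N => rw [Vaux, if_neg h]

lemma V_of_full (d : Deck n) (h : ∀ i, d i ≠ 0) :
    Vd d = (n : ℝ)⁻¹ * (1 + ∑ j, Vd (d.sub j)) := by
  rcases Nat.eq_zero_or_pos n with hn | hn
  · subst hn
    have h0 : ∑ i, d i = 0 := by simp
    have h1 : ∑ j : Fin 0, Vd (d.sub j) = 0 := by simp
    rw [h1]
    unfold Vd
    rw [h0]
    norm_num [Vaux]
  · have ht : ∑ i, d i ≠ 0 := by
      intro h0
      exact h ⟨0, hn⟩ (Finset.sum_eq_zero_iff.mp h0 _ (mem_univ _))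
    obtain ⟨N, hN⟩ := Nat.exists_eq_succ_of_ne_zero ht
    unfold Vd
    rw [hN, Vaux, if_pos h]
    congr 2
    apply Finset.sum_congr rfl
    intro j _
    have hj := total_sub d j (h j)
    rw [show ∑ i, d.sub j i = N by omega]

lemma sub_ne_of_ne (d : Deck n) (j k : Fin n) (hjk : j ≠ k) : d.sub j k = d k := by
  simp [Deck.sub, (Ne.symm hjk : k ≠ j)]

lemma Vd_sub_le : ∀ (N : ℕ) (d : Deck n), ∑ i, d i = N →
    ∀ k, d k ≠ 0 → Vd (d.sub k) ≤ Vd d := by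
  intro N
  induction N using Nat.strong_induction_on with
  | _ N ih =>
    intro d hN k hk
    by_cases hf : ∀ i, d i ≠ 0
    · by_cases hf2 : ∀ i, (d.sub k) i ≠ 0
      · rw [V_of_full d hf, V_of_full _ hf2]
        have hsum : ∑ j, Vd ((d.sub k).sub j) ≤ ∑ j, Vd (d.sub j) := by
          apply Finset.sum_le_sum
          intro j _
          rw [show (d.sub k).sub j = (d.sub j).sub k from sub_comm d k j]
          have hlt : (∑ i, (d.sub j) i) < N := by
            have := total_sub d j (hf j); omega
          apply ih _ hlt (d.sub j) rfl k
          by_cases hjk : j = k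
          · subst hjk; exact hf2 j
          · rw [sub_ne_of_ne d j k hjk]; exact hf k
        have hn0 : (0:ℝ) ≤ (n:ℝ)⁻¹ := by positivity
        nlinarith [hsum]
      · rw [V_of_not_full _ hf2]; exact Vd_nonneg d
    · have hf2 : ¬ ∀ i, (d.sub k) i ≠ 0 := by
        push_neg at hf ⊢
        obtain ⟨i, hi⟩ := hf
        have hik : i ≠ k := fun h => hk (h ▸ hi)
        exact ⟨i, by rw [sub_ne_of_ne d k i (Ne.symm hik)]; exact hi⟩
      rw [V_of_not_full _ hf2]; exact Vd_nonneg d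

lemma Vd_sub_le' (d : Deck n) (k : Fin n) (hk : d k ≠ 0) : Vd (d.sub k) ≤ Vd d :=
  Vd_sub_le _ d rfl k hk

lemma Vd_sub_lt : ∀ (N : ℕ) (d : Deck n), ∑ i, d i = N →
    (∀ i, d i ≠ 0) → ∀ k, Vd (d.sub k) < Vd d := by
  intro N
  induction N using Nat.strong_induction_on with
  | _ N ih =>
    intro d hN hf k
    have hn : 0 < n := k.pos
    have hnR : (0:ℝ) < (n:ℝ)⁻¹ := by positivity
    by_cases hf2 : ∀ i, (d.sub k) i ≠ 0
    · rw [V_of_full d hf, V_of_full _ hf2]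
      have hsum : ∑ j, Vd ((d.sub k).sub j) < ∑ j, Vd (d.sub j) := by
        apply Finset.sum_lt_sum
        · intro j _
          rw [show (d.sub k).sub j = (d.sub j).sub k from sub_comm d k j]
          apply Vd_sub_le' (d.sub j) k
          by_cases hjk : j = k
          · subst hjk; exact hf2 j
          · rw [sub_ne_of_ne d j k hjk]; exact hf k
        · refine ⟨k, mem_univ k, ?_⟩
          have hlt : (∑ i, (d.sub k) i) < N := by
            have := total_sub d k (hf k); omega
          exact ih _ hlt (d.sub k) rfl hf2 k
      nlinarith [hsum]
    · rw [V_of_not_full _ hf2, V_of_full d hf]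
      have : 0 ≤ ∑ j, Vd (d.sub j) := Finset.sum_nonneg fun j _ => Vd_nonneg _
      nlinarith

lemma Vd_sub_lt' (d : Deck n) (hf : ∀ i, d i ≠ 0) (k : Fin n) : Vd (d.sub k) < Vd d :=
  Vd_sub_lt _ d rfl hf k

lemma keyIneq (hn : 0 < n) (p a : Fin n → ℝ) (hp0 : ∀ i, 0 ≤ p i)
    (hp1 : ∑ i, p i = 1) (istar : Fin n) (hmin : ∀ i, p istar ≤ p i)
    (ha : ∀ k, a k < (n : ℝ)⁻¹ * (1 + ∑ j, a j)) :
    (p istar + ∑ j, p j * a j ≤ (n : ℝ)⁻¹ * (1 + ∑ j, a j)) ∧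
    ((∃ i, p i ≠ (n : ℝ)⁻¹) →
      p istar + ∑ j, p j * a j < (n : ℝ)⁻¹ * (1 + ∑ j, a j)) := by
  have hnR : (0:ℝ) < n := by exact_mod_cast hn
  obtain ⟨kstar, -, hk⟩ := Finset.exists_max_image Finset.univ a ⟨istar, mem_univ _⟩
  have hk' : ∀ j, a j ≤ a kstar := fun j => hk j (mem_univ j)
  set m := p istar with hm
  set A := ∑ j, a j with hA
  have hsplit : ∑ j, p j * a j = m * A + ∑ j, (p j - m) * a j := by
    rw [hA, Finset.mul_sum, ← Finset.sum_add_distrib]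
    exact Finset.sum_congr rfl fun j _ => by ring
  have hsum_dev : ∑ j, (p j - m) = 1 - n * m := by
    rw [Finset.sum_sub_distrib, hp1, Finset.sum_const, card_univ, Fintype.card_fin,
      nsmul_eq_mul]
  have hbound : ∑ j, (p j - m) * a j ≤ (1 - n * m) * a kstar := by
    calc ∑ j, (p j - m) * a j ≤ ∑ j, (p j - m) * a kstar :=
          Finset.sum_le_sum fun j _ =>
            mul_le_mul_of_nonneg_left (hk' j) (sub_nonneg.mpr (hmin j))
      _ = (1 - n * m) * a kstar := by rw [← Finset.sum_mul, hsum_dev]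
  have hc : 0 < 1 + A - n * a kstar := by
    have h1 : a kstar < (n:ℝ)⁻¹ * (1 + A) := ha kstar
    have h2 : (n:ℝ) * a kstar < (n:ℝ) * ((n:ℝ)⁻¹ * (1 + A)) :=
      mul_lt_mul_of_pos_left h1 hnR
    rw [← mul_assoc, mul_inv_cancel₀ (ne_of_gt hnR), one_mul] at h2
    linarith
  have hmle : m ≤ (n:ℝ)⁻¹ := by
    have h1 : (n:ℝ) * m ≤ 1 := by
      calc (n:ℝ) * m = ∑ _j : Fin n, m := by
            rw [Finset.sum_const, card_univ, Fintype.card_fin, nsmul_eq_mul]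
        _ ≤ ∑ j, p j := Finset.sum_le_sum fun j _ => hmin j
        _ = 1 := hp1
    rw [← one_div]
    rw [le_div_iff₀ hnR]
    linarith
  have key : m + ∑ j, p j * a j ≤ m * (1 + A - n * a kstar) + a kstar := by
    rw [hsplit]; nlinarith [hbound]
  have hval : (n:ℝ)⁻¹ * (1 + A - n * a kstar) + a kstar = (n:ℝ)⁻¹ * (1 + A) := by
    field_simp; ring
  constructor
  · have : m * (1 + A - n * a kstar) ≤ (n:ℝ)⁻¹ * (1 + A - n * a kstar) :=
      mul_le_mul_of_nonneg_right hmle hc.le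
    linarith
  · rintro ⟨i0, hne⟩
    have hmlt : m < (n:ℝ)⁻¹ := by
      rcases lt_or_eq_of_le hmle with h | h
      · exact h
      · exfalso
        have hall : ∀ j, (n:ℝ)⁻¹ ≤ p j := fun j => h ▸ hmin j
        have hlt0 : (n:ℝ)⁻¹ < p i0 := lt_of_le_of_ne (hall i0) (Ne.symm hne)
        have hsum1 : ∑ _j : Fin n, (n:ℝ)⁻¹ = 1 := by
          rw [Finset.sum_const, card_univ, Fintype.card_fin, nsmul_eq_mul,
            mul_inv_cancel₀ (ne_of_gt hnR)]
        have := Finset.sum_lt_sum (fun j (_ : j ∈ univ) => hall j)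
          ⟨i0, mem_univ _, hlt0⟩
        rw [hp1, hsum1] at this
        exact lt_irrefl _ this
    have : m * (1 + A - n * a kstar) < (n:ℝ)⁻¹ * (1 + A - n * a kstar) :=
      mul_lt_mul_of_pos_right hmlt hc
    linarith

lemma score_rec (G S : Strat n) (d : Deck n) (hd : d ≠ 0) :
    score G S d = ∑ j ∈ univ.filter (fun j => d j ≠ 0),
      S d j * (G d j + score G S (d.sub j)) := by
  obtain ⟨i0, hi0⟩ := (deck_ne_zero_iff d).mp hd
  have ht : ∑ i, d i ≠ 0 := by
    intro h0; exact hi0 (Finset.sum_eq_zero_iff.mp h0 i0 (mem_univ _))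
  obtain ⟨N, hN⟩ := Nat.exists_eq_succ_of_ne_zero ht
  unfold score
  rw [hN, scoreAux]
  apply Finset.sum_congr rfl
  intro j hj
  have hj' : d j ≠ 0 := by simpa using (Finset.mem_filter.mp hj).2
  have : scoreAux G S N (d.sub j) = scoreAux G S (∑ i, d.sub j i) (d.sub j) := by
    have := total_sub d j hj'
    rw [show ∑ i, d.sub j i = N by omega]
  rw [this]

lemma scoreAux_nonneg {G S : Strat n} (hG : IsGuesser G) (hS : IsShuffler S) :
    ∀ (N : ℕ) (d : Deck n), 0 ≤ scoreAux G S N d := by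
  intro N
  induction N with
  | zero => intro d; exact le_refl _
  | succ N ih =>
    intro d
    rw [scoreAux]
    apply Finset.sum_nonneg
    intro j hj
    have hj' : d j ≠ 0 := by simpa using (Finset.mem_filter.mp hj).2
    have hd : d ≠ 0 := (deck_ne_zero_iff d).mpr ⟨j, hj'⟩
    exact mul_nonneg ((hS d hd).1.1 j)
      (add_nonneg ((hG d hd).1 j) (ih _))

lemma score_nonneg {G S : Strat n} (hG : IsGuesser G) (hS : IsShuffler S)
    (d : Deck n) : 0 ≤ score G S d := scoreAux_nonneg hG hS _ d

lemma score_zero (G S : Strat n) : score G S (0 : Deck n) = 0 := by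
  unfold score
  have : ∑ i, (0 : Deck n) i = 0 := by simp
  rw [this, scoreAux]

lemma exists_min (f : Fin n → ℝ) (hn : 0 < n) : ∃ m : Fin n, ∀ i', f m ≤ f i' := by
  obtain ⟨b, -, hb⟩ := Finset.exists_min_image univ f ⟨⟨0, hn⟩, mem_univ _⟩
  exact ⟨b, fun i' => hb i' (mem_univ _)⟩

/-- The guesser that deterministically guesses an argmin of the shuffler's distribution. -/
noncomputable def Gstar (S : Strat n) : Strat n := fun e i =>
  if h : ∃ m : Fin n, ∀ i', S e m ≤ S e i' then (if i = h.choose then 1 else 0) else 0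

lemma Gstar_guesser (S : Strat n) : IsGuesser (Gstar S) := by
  intro d hd
  obtain ⟨i0, -⟩ := (deck_ne_zero_iff d).mp hd
  have h : ∃ m : Fin n, ∀ i', S d m ≤ S d i' := exists_min (S d) i0.pos
  constructor
  · intro i
    simp only [Gstar, dif_pos h]
    split <;> norm_num
  · simp only [Gstar, dif_pos h]
    simp

/-- The guesser that guesses a missing card if one exists, else uniform. -/
noncomputable def G0 : Strat n := fun e =>
  if h : ∃ i, e i = 0 then (fun i => if i = h.choose then 1 else 0)
  else (fun _ => (n : ℝ)⁻¹)

lemma G0_guesser : IsGuesser (G0 : Strat n) := by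
  intro d hd
  obtain ⟨i0, -⟩ := (deck_ne_zero_iff d).mp hd
  have hnR : (0:ℝ) < n := by exact_mod_cast i0.pos
  by_cases h : ∃ i, d i = 0
  · constructor
    · intro i
      simp only [G0, dif_pos h]
      split <;> norm_num
    · simp only [G0, dif_pos h]
      simp
  · constructor
    · intro i; simp only [G0, dif_neg h]; positivity
    · simp only [G0, dif_neg h]
      rw [Finset.sum_const, card_univ, Fintype.card_fin, nsmul_eq_mul,
        mul_inv_cancel₀ (ne_of_gt hnR)]

lemma first_piece_le {S' : Strat n} (hS' : IsShuffler S') (d : Deck n) (hd : d ≠ 0)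
    (h : ∃ m : Fin n, ∀ i', S' d m ≤ S' d i') :
    ∑ j ∈ univ.filter (fun j => d j ≠ 0), S' d j * Gstar S' d j ≤ S' d h.choose := by
  have hrw : ∀ j, S' d j * Gstar S' d j = if j = h.choose then S' d j else 0 := by
    intro j
    simp only [Gstar, dif_pos h]
    split <;> simp
  rw [Finset.sum_congr rfl fun j _ => hrw j]
  rw [Finset.sum_ite_eq' (univ.filter (fun j => d j ≠ 0)) h.choose (fun j => S' d j)]
  split
  · exact le_refl _
  · exact (hS' d hd).1.1 _

lemma score_Gstar_le {S' : Strat n} (hS' : IsShuffler S') :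
    ∀ (N : ℕ) (d : Deck n), ∑ i, d i = N → score (Gstar S') S' d ≤ Vd d := by
  intro N
  induction N using Nat.strong_induction_on with
  | _ N ih =>
    intro d hN
    by_cases hd : d = 0
    · subst hd; rw [score_zero]; exact Vd_nonneg _
    obtain ⟨iw, hiw⟩ := (deck_ne_zero_iff d).mp hd
    have hn : 0 < n := iw.pos
    have hex : ∃ m : Fin n, ∀ i', S' d m ≤ S' d i' := exists_min (S' d) hn
    set istar := hex.choose with histar
    rw [score_rec _ _ _ hd]
    have step1 : ∑ j ∈ univ.filter (fun j => d j ≠ 0),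
        S' d j * (Gstar S' d j + score (Gstar S') S' (d.sub j)) ≤
        ∑ j ∈ univ.filter (fun j => d j ≠ 0),
        S' d j * (Gstar S' d j + Vd (d.sub j)) := by
      apply Finset.sum_le_sum
      intro j hj
      have hj' : d j ≠ 0 := by simpa using (Finset.mem_filter.mp hj).2
      have hlt : (∑ i, (d.sub j) i) < N := by
        have := total_sub d j hj'; omega
      exact mul_le_mul_of_nonneg_left
        (add_le_add_right (ih _ hlt (d.sub j) rfl) _) ((hS' d hd).1.1 j)
    have step2 : ∑ j ∈ univ.filter (fun j => d j ≠ 0),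
        S' d j * (Gstar S' d j + Vd (d.sub j)) =
        (∑ j ∈ univ.filter (fun j => d j ≠ 0), S' d j * Gstar S' d j) +
        ∑ j ∈ univ.filter (fun j => d j ≠ 0), S' d j * Vd (d.sub j) := by
      rw [← Finset.sum_add_distrib]
      exact Finset.sum_congr rfl fun j _ => by ring
    have step3 := first_piece_le hS' d hd hex
    by_cases hf : ∀ i, d i ≠ 0
    · have hfilt : univ.filter (fun j => d j ≠ 0) = univ :=
        Finset.filter_true_of_mem fun j _ => hf j
      rw [hfilt] at step1 step2 step3 ⊢
      have hkey := (keyIneq hn (S' d) (fun j => Vd (d.sub j)) (hS' d hd).1.1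
        (hS' d hd).1.2 istar hex.choose_spec
        (fun k => by rw [← V_of_full d hf]; exact Vd_sub_lt' d hf k)).1
      rw [V_of_full d hf]
      calc ∑ j, S' d j * (Gstar S' d j + score (Gstar S') S' (d.sub j))
          ≤ _ := step1
        _ = _ := step2
        _ ≤ S' d istar + ∑ j, S' d j * Vd (d.sub j) := by
            exact add_le_add_left step3 _
        _ ≤ (n:ℝ)⁻¹ * (1 + ∑ j, Vd (d.sub j)) := hkey
    · push_neg at hf
      obtain ⟨i0, hi0⟩ := hf
      have hp0 : S' d i0 = 0 := by
        by_contra hc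
        exact ((hS' d hd).2 i0 hc) hi0
      have hfirst : S' d istar ≤ 0 := hp0 ▸ hex.choose_spec i0
      have hsec : ∑ j ∈ univ.filter (fun j => d j ≠ 0), S' d j * Vd (d.sub j) = 0 := by
        apply Finset.sum_eq_zero
        intro j hj
        have hj' : d j ≠ 0 := by simpa using (Finset.mem_filter.mp hj).2
        have : Vd (d.sub j) = 0 := by
          apply V_of_not_full
          push_neg
          refine ⟨i0, ?_⟩
          rw [sub_ne_of_ne d j i0 (fun h => hj' (by rw [h]; exact hi0))]
          exact hi0
        rw [this, mul_zero]
      rw [V_of_not_full d (by push_neg; exact ⟨i0, hi0⟩)]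
      calc ∑ j ∈ univ.filter (fun j => d j ≠ 0),
            S' d j * (Gstar S' d j + score (Gstar S') S' (d.sub j))
          ≤ _ := step1
        _ = _ := step2
        _ ≤ S' d istar + 0 := by rw [hsec]; exact add_le_add_left step3 _
        _ ≤ 0 := by linarith

lemma score_Gstar_le' {S' : Strat n} (hS' : IsShuffler S') (d : Deck n) :
    score (Gstar S') S' d ≤ Vd d := score_Gstar_le hS' _ d rfl

lemma score_Gstar_bound_full {S' : Strat n} (hS' : IsShuffler S') (d : Deck n)
    (hf : ∀ i, d i ≠ 0) (hn : 0 < n) :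
    ∃ istar : Fin n, (∀ i, S' d istar ≤ S' d i) ∧
      score (Gstar S') S' d ≤ S' d istar + ∑ j, S' d j * Vd (d.sub j) := by
  have hd : d ≠ 0 := (deck_ne_zero_iff d).mpr ⟨⟨0, hn⟩, hf _⟩
  have hex : ∃ m : Fin n, ∀ i', S' d m ≤ S' d i' := exists_min (S' d) hn
  refine ⟨hex.choose, hex.choose_spec, ?_⟩
  have hfilt : univ.filter (fun j => d j ≠ 0) = univ :=
    Finset.filter_true_of_mem fun j _ => hf j
  rw [score_rec _ _ _ hd, hfilt]
  have step1 : ∑ j, S' d j * (Gstar S' d j + score (Gstar S') S' (d.sub j)) ≤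
      ∑ j, S' d j * (Gstar S' d j + Vd (d.sub j)) :=
    Finset.sum_le_sum fun j _ => mul_le_mul_of_nonneg_left
      (add_le_add_right (score_Gstar_le' hS' (d.sub j)) _) ((hS' d hd).1.1 j)
  have step2 : ∑ j, S' d j * (Gstar S' d j + Vd (d.sub j)) =
      (∑ j, S' d j * Gstar S' d j) + ∑ j, S' d j * Vd (d.sub j) := by
    rw [← Finset.sum_add_distrib]
    exact Finset.sum_congr rfl fun j _ => by ring
  have step3 := first_piece_le hS' d hd hex
  rw [hfilt] at step3
  linarith

lemma score_G0_eq {S : Strat n} (hS : IsShuffler S)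
    (hU : ∀ e : Deck n, (∀ i, e i ≠ 0) → ∀ i, S e i = (n : ℝ)⁻¹) :
    ∀ (N : ℕ) (d : Deck n), ∑ i, d i = N → score G0 S d = Vd d := by
  intro N
  induction N using Nat.strong_induction_on with
  | _ N ih =>
    intro d hN
    by_cases hd : d = 0
    · subst hd
      rw [score_zero]
      unfold Vd
      rw [show ∑ i, (0:Deck n) i = 0 by simp]
      rfl
    · by_cases hf : ∀ i, d i ≠ 0
      · -- full deck
        obtain ⟨iw, -⟩ := (deck_ne_zero_iff d).mp hd
        have hn : 0 < n := iw.pos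
        have hnR : (0:ℝ) < n := by exact_mod_cast hn
        have hfilt : univ.filter (fun j => d j ≠ 0) = univ :=
          Finset.filter_true_of_mem fun j _ => hf j
        have hnex : ¬ ∃ i, d i = 0 := by push_neg; exact hf
        rw [score_rec _ _ _ hd, hfilt]
        have hterm : ∀ j : Fin n, S d j * (G0 d j + score G0 S (d.sub j)) =
            (n:ℝ)⁻¹ * ((n:ℝ)⁻¹ + Vd (d.sub j)) := by
          intro j
          have h1 : S d j = (n:ℝ)⁻¹ := hU d hf j
          have h2 : G0 d j = (n:ℝ)⁻¹ := by simp only [G0, dif_neg hnex]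
          have hlt : (∑ i, (d.sub j) i) < N := by
            have := total_sub d j (hf j); omega
          rw [h1, h2, ih _ hlt (d.sub j) rfl]
        rw [Finset.sum_congr rfl fun j _ => hterm j, ← Finset.mul_sum,
          Finset.sum_add_distrib, Finset.sum_const, card_univ, Fintype.card_fin,
          nsmul_eq_mul, mul_inv_cancel₀ (ne_of_gt hnR), V_of_full d hf]
      · -- not full
        have hex : ∃ i, d i = 0 := by push_neg at hf; exact hf
        set i0 := hex.choose with hi0def
        have hi0 : d i0 = 0 := hex.choose_spec
        rw [score_rec _ _ _ hd, V_of_not_full d (by push_neg; exact hex)]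
        apply Finset.sum_eq_zero
        intro j hj
        have hj' : d j ≠ 0 := by simpa using (Finset.mem_filter.mp hj).2
        have hji0 : j ≠ i0 := fun h => hj' (by rw [h]; exact hi0)
        have h1 : G0 d j = 0 := by
          simp only [G0, dif_pos hex]
          rw [if_neg hji0]
        have hnf : ¬ ∀ i, (d.sub j) i ≠ 0 := by
          push_neg
          exact ⟨i0, by rw [sub_ne_of_ne d j i0 hji0]; exact hi0⟩
        have hlt : (∑ i, (d.sub j) i) < N := by
          have := total_sub d j hj'; omega
        have h2 : score G0 S (d.sub j) = 0 := by
          rw [ih _ hlt (d.sub j) rfl, V_of_not_full _ hnf]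
        rw [h1, h2, add_zero, mul_zero]

lemma score_ge_V {S : Strat n} (hS : IsShuffler S)
    (hU : ∀ e : Deck n, (∀ i, e i ≠ 0) → ∀ i, S e i = (n : ℝ)⁻¹)
    {G : Strat n} (hG : IsGuesser G) :
    ∀ (N : ℕ) (d : Deck n), ∑ i, d i = N → Vd d ≤ score G S d := by
  intro N
  induction N using Nat.strong_induction_on with
  | _ N ih =>
    intro d hN
    by_cases hf : ∀ i, d i ≠ 0
    · by_cases hd : d = 0
      · subst hd
        rw [score_zero]
        unfold Vd
        rw [show ∑ i, (0:Deck n) i = 0 by simp]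
        exact le_refl _
      obtain ⟨iw, -⟩ := (deck_ne_zero_iff d).mp hd
      have hn : 0 < n := iw.pos
      have hnR : (0:ℝ) < (n:ℝ)⁻¹ := by positivity
      have hfilt : univ.filter (fun j => d j ≠ 0) = univ :=
        Finset.filter_true_of_mem fun j _ => hf j
      rw [score_rec _ _ _ hd, hfilt, V_of_full d hf]
      have hterm : ∀ j : Fin n, S d j * (G d j + score G S (d.sub j)) =
          (n:ℝ)⁻¹ * (G d j + score G S (d.sub j)) := fun j => by rw [hU d hf j]
      rw [Finset.sum_congr rfl fun j _ => hterm j, ← Finset.mul_sum,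
        Finset.sum_add_distrib, (hG d hd).2]
      apply mul_le_mul_of_nonneg_left _ hnR.le
      apply add_le_add_right
      apply Finset.sum_le_sum
      intro j _
      have hlt : (∑ i, (d.sub j) i) < N := by
        have := total_sub d j (hf j); omega
      exact ih _ hlt (d.sub j) rfl
    · rw [V_of_not_full d hf]
      exact score_nonneg hG hS d



lemma Fval_bddBelow {S : Strat n} (hS : IsShuffler S) (d : Deck n) :
    BddBelow {x | ∃ G, IsGuesser G ∧ score G S d = x} :=
  ⟨0, fun x ⟨G, hG, hx⟩ => hx ▸ score_nonneg hG hS d⟩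

lemma Fval_le_V {S : Strat n} (hS : IsShuffler S) (d : Deck n) :
    Fval S d ≤ Vd d :=
  le_trans (csInf_le (Fval_bddBelow hS d) ⟨Gstar S, Gstar_guesser S, rfl⟩)
    (score_Gstar_le' hS d)

lemma Fval_eq_V {S : Strat n} (hS : IsShuffler S)
    (hU : ∀ e : Deck n, (∀ i, e i ≠ 0) → ∀ i, S e i = (n : ℝ)⁻¹) (d : Deck n) :
    Fval S d = Vd d := by
  apply le_antisymm
  · exact csInf_le (Fval_bddBelow hS d) ⟨G0, G0_guesser, score_G0_eq hS hU _ d rfl⟩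
  · exact le_csInf ⟨Vd d, G0, G0_guesser, score_G0_eq hS hU _ d rfl⟩
      (fun x ⟨G, hG, hx⟩ => hx ▸ score_ge_V hS hU hG _ d rfl)

lemma greedy_shuffler : IsShuffler (greedy : Strat n) := by
  intro d hd
  obtain ⟨i0, hi0⟩ := (deck_ne_zero_iff d).mp hd
  have hpos : 0 < (univ.filter fun j => d j ≠ 0).card :=
    Finset.card_pos.mpr ⟨i0, Finset.mem_filter.mpr ⟨mem_univ _, hi0⟩⟩
  have hcR : (0:ℝ) < ((univ.filter fun j => d j ≠ 0).card : ℝ) := by exact_mod_cast hpos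
  refine ⟨⟨?_, ?_⟩, ?_⟩
  · intro i
    unfold greedy
    split
    · positivity
    · exact le_refl _
  · unfold greedy
    rw [← Finset.sum_filter, Finset.sum_const, nsmul_eq_mul,
      mul_inv_cancel₀ (ne_of_gt hcR)]
  · intro i hi
    by_contra h0
    exact hi (by unfold greedy; rw [if_neg (by simp [h0])])

lemma greedy_unif :
    ∀ e : Deck n, (∀ i, e i ≠ 0) → ∀ i, (greedy : Strat n) e i = (n : ℝ)⁻¹ := by
  intro e he i
  unfold greedy
  rw [if_pos (he i), Finset.filter_true_of_mem fun j _ => he j, card_univ,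
    Fintype.card_fin]

lemma Fopt_eq_V (d : Deck n) (hd : d ≠ 0) : Fopt d = Vd d := by
  have hub : ∀ x ∈ {x | ∃ S, IsShuffler S ∧ Fval S d = x}, x ≤ Vd d := by
    rintro x ⟨S', hS', hx⟩
    exact hx ▸ Fval_le_V hS' d
  have hmem : Vd d ∈ {x | ∃ S, IsShuffler S ∧ Fval S d = x} :=
    ⟨greedy, greedy_shuffler, Fval_eq_V greedy_shuffler greedy_unif d⟩
  exact le_antisymm (csSup_le ⟨Vd d, hmem⟩ hub) (le_csSup ⟨Vd d, hub⟩ hmem)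

end Stmt8

open Stmt8

/-- a Shuffler strategy is a maximizing Shuffler strategy iff it is uniform
on `[n]` on every fully-supported deck. -/
theorem stmt8 (S : ∀ n, Strat n) (hS : ∀ n, IsShuffler (S n)) :
    (∀ (n : ℕ) (d : Deck n), d ≠ 0 → Fval (S n) d = Fopt d) ↔
      (∀ (n : ℕ) (d : Deck n), (∀ i, d i ≠ 0) → ∀ i, S n d i = (n : ℝ)⁻¹) := by
  constructor
  · intro h n d hfull i
    have hn : 0 < n := i.pos
    have hd : d ≠ 0 := (deck_ne_zero_iff d).mpr ⟨i, hfull i⟩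
    by_contra hne
    have h1 : Fval (S n) d = Vd d := (h n d hd).trans (Fopt_eq_V d hd)
    obtain ⟨istar, histar, hbd⟩ := score_Gstar_bound_full (hS n) d hfull hn
    have h2 : Fval (S n) d ≤ score (Gstar (S n)) (S n) d :=
      csInf_le (Fval_bddBelow (hS n) d) ⟨Gstar (S n), Gstar_guesser _, rfl⟩
    have hkey := (keyIneq hn (S n d) (fun j => Vd (d.sub j))
      ((hS n) d hd).1.1 ((hS n) d hd).1.2 istar histar
      (fun k => by rw [← V_of_full d hfull]; exact Vd_sub_lt' d hfull k)).2
      ⟨i, hne⟩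
    rw [V_of_full d hfull] at h1
    linarith
  · intro h n d hd
    exact (Fval_eq_V (hS n) (fun e he i => h n e he i) d).trans (Fopt_eq_V d hd).symm
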